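/- If R ↦ ψ^R(x) - C(x)R² is monotonically non-increasing in R for every x, then the pointwise representative ψ*(x) := lim_{R→0} ψ^R(x) exists (possibly +∞... but here finite a.e.), equals ψ a.e., and is lower semi-continuous. -/

import Mathlib

open MeasureTheory Filter

/-- Continuity of `x ↦ ∫_{B(x,R)} ψ` for locally integrable `ψ`. -/
lemma aux_cont_integral_ball (d : ℕ) (ψ : EuclideanSpace ℝ (Fin d) → ℝ)
    (hloc : LocallyIntegrable ψ volume) {R : ℝ} (hR : 0 < R) :
    Continuous fun x => ∫ y in Metric.ball x R, ψ y := by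
  rw [continuous_iff_continuousAt]
  intro x₀
  have hmeas : ∀ x : EuclideanSpace ℝ (Fin d),
      ∫ y in Metric.ball x R, ψ y = ∫ y, (Metric.ball x R).indicator ψ y := fun x =>
    (integral_indicator Metric.isOpen_ball.measurableSet).symm
  simp only [ContinuousAt, hmeas]
  apply tendsto_integral_filter_of_dominated_convergence
      ((Metric.closedBall x₀ (R + 1)).indicator fun y => ‖ψ y‖)
  · exact Eventually.of_forall fun x =>
      hloc.aestronglyMeasurable.indicator Metric.isOpen_ball.measurableSet
  · filter_upwards [Metric.ball_mem_nhds x₀ one_pos] with x hx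
    refine Eventually.of_forall fun y => ?_
    by_cases hy : y ∈ Metric.ball x R
    · rw [Set.indicator_of_mem hy]
      have h1 := Metric.mem_ball.1 hy
      have h2 := Metric.mem_ball.1 hx
      have : y ∈ Metric.closedBall x₀ (R + 1) := by
        rw [Metric.mem_closedBall]
        calc dist y x₀ ≤ dist y x + dist x x₀ := dist_triangle _ _ _
          _ ≤ R + 1 := by linarith
      rw [Set.indicator_of_mem this]
    · rw [Set.indicator_of_notMem hy, norm_zero]
      exact Set.indicator_apply_nonneg fun _ => norm_nonneg _
  · have h5 : IntegrableOn (fun y => ‖ψ y‖) (Metric.closedBall x₀ (R + 1)) volume :=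
      (hloc.integrableOn_isCompact (isCompact_closedBall x₀ (R + 1))).norm
    exact h5.integrable_indicator measurableSet_closedBall
  · have hsph : volume (Metric.sphere x₀ R) = 0 :=
      Measure.addHaar_sphere_of_ne_zero _ _ hR.ne'
    have hae : ∀ᵐ y : EuclideanSpace ℝ (Fin d), y ∉ Metric.sphere x₀ R := by
      rw [ae_iff]; simpa only [not_not, Set.setOf_mem_eq] using hsph
    filter_upwards [hae] with y hy
    have hne : dist y x₀ ≠ R := fun h => hy (Metric.mem_sphere.2 h)
    rcases lt_or_gt_of_ne hne with h | h
    · have hmem : y ∈ Metric.ball x₀ R := Metric.mem_ball.2 h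
      rw [Set.indicator_of_mem hmem]
      have hev : ∀ᶠ x in nhds x₀, (Metric.ball x R).indicator ψ y = ψ y := by
        filter_upwards [Metric.ball_mem_nhds x₀ (by linarith : (0:ℝ) < R - dist y x₀)] with x hx
        apply Set.indicator_of_mem
        rw [Metric.mem_ball]
        have h2 := Metric.mem_ball.1 hx
        calc dist y x ≤ dist y x₀ + dist x₀ x := dist_triangle _ _ _
          _ < R := by rw [dist_comm x₀ x]; linarith
      exact Tendsto.congr' (hev.mono fun x hx => hx.symm) tendsto_const_nhds
    · have hmem : y ∉ Metric.ball x₀ R := by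
        rw [Metric.mem_ball]; linarith
      rw [Set.indicator_of_notMem hmem]
      have hev : ∀ᶠ x in nhds x₀, (Metric.ball x R).indicator ψ y = 0 := by
        filter_upwards [Metric.ball_mem_nhds x₀ (by linarith : (0:ℝ) < dist y x₀ - R)] with x hx
        apply Set.indicator_of_notMem
        rw [Metric.mem_ball]
        have h2 := Metric.mem_ball.1 hx
        intro hc
        have h4 := dist_triangle y x x₀
        linarith
      exact Tendsto.congr' (hev.mono fun x hx => hx.symm) tendsto_const_nhds

/-- if `ψ` is locally integrable and its ball averages
`ψ^R(x) = ⨍_{B(x,R)} ψ` satisfy that `R ↦ ψ^R(x) - C(x)R²` is monotonically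
non-increasing in `R` (for `0 < R ≤ 1`, with `C` continuous and nonnegative),
then the pointwise representative `ψ*(x) = lim_{R→0⁺} ψ^R(x)` exists in
`ℝ ∪ {+∞}`, equals `ψ` almost everywhere (in particular is finite a.e.), and
is lower semi-continuous. -/
theorem monotone_averages_lsc_representative (d : ℕ)
    (ψ : EuclideanSpace ℝ (Fin d) → ℝ)
    (hloc : LocallyIntegrable ψ volume)
    (C : EuclideanSpace ℝ (Fin d) → ℝ) (hCc : Continuous C)
    (hC0 : ∀ x, 0 ≤ C x)
    (hmono : ∀ x, ∀ R₁ R₂ : ℝ, 0 < R₁ → R₁ < R₂ → R₂ ≤ 1 →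
      (⨍ y in Metric.ball x R₂, ψ y) - C x * R₂ ^ 2 ≤
        (⨍ y in Metric.ball x R₁, ψ y) - C x * R₁ ^ 2) :
    ∃ ψs : EuclideanSpace ℝ (Fin d) → EReal,
      (∀ x, Tendsto (fun R : ℝ => (((⨍ y in Metric.ball x R, ψ y) : ℝ) : EReal))
        (nhdsWithin 0 (Set.Ioi 0)) (nhds (ψs x))) ∧
      (∀ᵐ x ∂(volume : Measure (EuclideanSpace ℝ (Fin d))),
        ψs x = ((ψ x : ℝ) : EReal)) ∧
      LowerSemicontinuous ψs := by
  classical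
  have havgc : ∀ R : ℝ, 0 < R → Continuous fun x : EuclideanSpace ℝ (Fin d) =>
      ⨍ y in Metric.ball x R, ψ y := by
    intro R hR
    have h1 := aux_cont_integral_ball d ψ hloc hR
    have heq : (fun x : EuclideanSpace ℝ (Fin d) => ⨍ y in Metric.ball x R, ψ y) =
        fun x => (volume (Metric.ball (0 : EuclideanSpace ℝ (Fin d)) R)).toReal⁻¹ •
          ∫ y in Metric.ball x R, ψ y := by
      funext x
      rw [setAverage_eq, measureReal_def, Measure.addHaar_ball_center]
    rw [heq]
    exact (continuous_const (y := (volume (Metric.ball (0 : EuclideanSpace ℝ (Fin d)) R)).toReal⁻¹)).smul h1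
  set g : EuclideanSpace ℝ (Fin d) → ℝ → ℝ :=
    fun x R => (⨍ y in Metric.ball x R, ψ y) - C x * R ^ 2 with hgdef
  set ψs : EuclideanSpace ℝ (Fin d) → EReal :=
    fun x => ⨆ R : Set.Ioc (0 : ℝ) 1, ((g x R.1 : ℝ) : EReal) with hψsdef
  have hgle : ∀ x, ∀ R ∈ Set.Ioc (0 : ℝ) 1, ((g x R : ℝ) : EReal) ≤ ψs x := fun x R hR =>
    le_iSup (fun R : Set.Ioc (0 : ℝ) 1 => ((g x R.1 : ℝ) : EReal)) ⟨R, hR⟩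
  have hbot : ∀ x, ((g x 1 : ℝ) : EReal) ≤ ψs x := fun x =>
    hgle x 1 ⟨one_pos, le_refl 1⟩
  have hmono' : ∀ x, ∀ R₁ R₂ : ℝ, 0 < R₁ → R₁ ≤ R₂ → R₂ ≤ 1 → g x R₂ ≤ g x R₁ := by
    intro x R₁ R₂ h1 h12 h2
    rcases eq_or_lt_of_le h12 with rfl | hlt
    · exact le_refl _
    · exact hmono x R₁ R₂ h1 hlt h2
  have hgavg : ∀ x R, g x R ≤ ⨍ y in Metric.ball x R, ψ y := by
    intro x R
    have hnn := mul_nonneg (hC0 x) (sq_nonneg R)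
    show (⨍ y in Metric.ball x R, ψ y) - C x * R ^ 2 ≤ _
    linarith
  have htend : ∀ x, Tendsto (fun R : ℝ => (((⨍ y in Metric.ball x R, ψ y) : ℝ) : EReal))
      (nhdsWithin 0 (Set.Ioi 0)) (nhds (ψs x)) := by
    intro x
    rw [tendsto_order]
    constructor
    · intro a ha
      rw [hψsdef] at ha
      obtain ⟨⟨R₀, hR₀⟩, haR₀⟩ := lt_iSup_iff.1 ha
      filter_upwards [Ioo_mem_nhdsGT hR₀.1] with R hR
      have h1 : g x R₀ ≤ g x R := hmono' x R R₀ hR.1 hR.2.le hR₀.2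
      calc a < ((g x R₀ : ℝ) : EReal) := haR₀
        _ ≤ (((⨍ y in Metric.ball x R, ψ y) : ℝ) : EReal) :=
          EReal.coe_le_coe_iff.2 (le_trans h1 (hgavg x R))
    · intro b hb
      have htop : ψs x ≠ ⊤ := ne_top_of_lt hb
      have hbot' : ψs x ≠ ⊥ := (lt_of_lt_of_le (EReal.bot_lt_coe _) (hbot x)).ne'
      have hSc : (((ψs x).toReal : ℝ) : EReal) = ψs x := EReal.coe_toReal htop hbot'
      rcases eq_or_ne b ⊤ with rfl | hbtop
      · filter_upwards with R using EReal.coe_lt_top _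
      · have hbbot : b ≠ ⊥ := (lt_of_lt_of_le (lt_of_lt_of_le (EReal.bot_lt_coe _)
          (hbot x)) hb.le).ne'
        have hbc : ((b.toReal : ℝ) : EReal) = b := EReal.coe_toReal hbtop hbbot
        have hSb : (ψs x).toReal < b.toReal := by
          rw [← EReal.coe_lt_coe_iff, hSc, hbc]; exact hb
        have hCtend : Tendsto (fun R : ℝ => C x * R ^ 2) (nhdsWithin 0 (Set.Ioi 0)) (nhds 0) := by
          have h0 : Tendsto (fun R : ℝ => C x * R ^ 2) (nhds 0) (nhds (C x * 0 ^ 2)) :=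
            (continuous_const.mul (continuous_pow 2)).tendsto 0
          simpa using h0.mono_left nhdsWithin_le_nhds
        have hev : ∀ᶠ R in nhdsWithin (0:ℝ) (Set.Ioi 0),
            C x * R ^ 2 < b.toReal - (ψs x).toReal :=
          hCtend.eventually_lt_const (by linarith)
        filter_upwards [hev, Ioo_mem_nhdsGT one_pos] with R hR1 hR2
        have hgS : g x R ≤ (ψs x).toReal := by
          rw [← EReal.coe_le_coe_iff, hSc]; exact hgle x R ⟨hR2.1, hR2.2.le⟩
        have havgb : (⨍ y in Metric.ball x R, ψ y) < b.toReal := by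
          have heq2 : (⨍ y in Metric.ball x R, ψ y) = g x R + C x * R ^ 2 := by
            show _ = (⨍ y in Metric.ball x R, ψ y) - C x * R ^ 2 + C x * R ^ 2
            ring
          rw [heq2]; linarith
        calc (((⨍ y in Metric.ball x R, ψ y) : ℝ) : EReal) < ((b.toReal : ℝ) : EReal) :=
            EReal.coe_lt_coe_iff.2 havgb
          _ = b := hbc
  refine ⟨ψs, htend, ?_, ?_⟩
  · have hball : ∀ (x : EuclideanSpace ℝ (Fin d)) (r : ℝ), 0 < r →
        Metric.ball x r =ᵐ[volume] Metric.closedBall x r := by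
      intro x r hr
      rw [MeasureTheory.ae_eq_set]
      constructor
      · rw [Set.diff_eq_empty.2 Metric.ball_subset_closedBall]; exact measure_empty
      · rw [Metric.closedBall_diff_ball]
        exact Measure.addHaar_sphere_of_ne_zero _ _ hr.ne'
    filter_upwards [IsUnifLocDoublingMeasure.ae_tendsto_average
      (μ := (volume : Measure (EuclideanSpace ℝ (Fin d)))) hloc 1] with x hx
    have h1 : Tendsto (fun r : ℝ => ⨍ y in Metric.closedBall x r, ψ y)
        (nhdsWithin 0 (Set.Ioi 0)) (nhds (ψ x)) := by
      apply hx (fun _ => x) id tendsto_id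
      filter_upwards [self_mem_nhdsWithin] with r hr
      exact Metric.mem_closedBall_self (by simp at hr ⊢; linarith)
    have h2 : Tendsto (fun r : ℝ => ⨍ y in Metric.ball x r, ψ y)
        (nhdsWithin 0 (Set.Ioi 0)) (nhds (ψ x)) := by
      apply Tendsto.congr' _ h1
      filter_upwards [self_mem_nhdsWithin] with r hr
      have hae := (hball x r hr).symm
      rw [setAverage_eq, setAverage_eq, measureReal_def, measureReal_def, measure_congr hae, setIntegral_congr_set hae]
    have h3 : Tendsto (fun r : ℝ => (((⨍ y in Metric.ball x r, ψ y) : ℝ) : EReal))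
        (nhdsWithin 0 (Set.Ioi 0)) (nhds ((ψ x : ℝ) : EReal)) :=
      (continuous_coe_real_ereal.tendsto _).comp h2
    exact tendsto_nhds_unique (htend x) h3
  · rw [hψsdef]
    apply lowerSemicontinuous_iSup
    intro R
    have hc : Continuous fun x => g x R.1 :=
      (havgc R.1 R.2.1).sub (hCc.mul continuous_const)
    exact (continuous_coe_real_ereal.comp hc).lowerSemicontinuous
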